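/- arXiv:1709.01393 — 2 statements merged into one kernel-verified Lean document; each statement's English description precedes it below -/
import Mathlib

section
/- The set {a b^{-1} : a, b ∈ Path(E), r(a) = r(b)} ∪ {0}, with multiplication defined by a b^{-1} · c d^{-1} = a c_1 d^{-1} if c = b c_1, a (d b_1)^{-1} if b = c b_1, and 0 otherwise, is an inverse semigroup in which the inverse of u v^{-1} is v u^{-1}. -/
universe u

/-- A directed graph. -/
structure DiGraph : Type (u + 1) where
  V : Type u
  E : Type u
  s : E → V
  r : E → V

namespace DiGraph

variable (G : DiGraph.{u})

/-- A list of edges forms a valid path starting at vertex `v`. -/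
def Valid (v : G.V) : List G.E → Prop
  | [] => True
  | e :: l => G.s e = v ∧ Valid (G.r e) l

/-- the endpoint of a list of edges starting at `v`. -/
def dst (v : G.V) : List G.E → G.V
  | [] => v
  | e :: l => dst (G.r e) l

variable {G}

lemma dst_append (v : G.V) (l₁ l₂ : List G.E) :
    G.dst v (l₁ ++ l₂) = G.dst (G.dst v l₁) l₂ := by
  induction l₁ generalizing v with
  | nil => rfl
  | cons e t ih => simp [dst, ih]

lemma valid_append (v : G.V) (l₁ l₂ : List G.E) :
    G.Valid v (l₁ ++ l₂) ↔ G.Valid v l₁ ∧ G.Valid (G.dst v l₁) l₂ := by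
  induction l₁ generalizing v with
  | nil => simp [Valid, dst]
  | cons e t ih => simp [Valid, dst, ih, and_assoc]

variable (G) in
/-- A (finite, directed) path in `G`: a source vertex together with a
composable list of edges.  Paths of length zero are the vertices. -/
structure GPath : Type u where
  src : G.V
  edges : List G.E
  valid : G.Valid src edges

/-- The range (end vertex) of a path. -/
def GPath.rng (p : G.GPath) : G.V := G.dst p.src p.edges

/-- Concatenation of composable paths. -/
def GPath.comp (p q : G.GPath) (h : p.rng = q.src) : G.GPath :=
  ⟨p.src, p.edges ++ q.edges, by
    rw [valid_append]
    exact ⟨p.valid, by rw [show G.dst p.src p.edges = q.src from h]; exact q.valid⟩⟩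

lemma GPath.comp_rng (p q : G.GPath) (h : p.rng = q.src) : (p.comp q h).rng = q.rng := by
  show G.dst p.src (p.edges ++ q.edges) = _
  rw [dst_append, show G.dst p.src p.edges = q.src from h]; rfl

/-- If `p` is a prefix of the path `q`, the remaining path (so that
`q = p.comp (p.strip q _ _)`). -/
def GPath.strip (p q : G.GPath) (hs : p.src = q.src) (hp : p.edges <+: q.edges) : G.GPath :=
  ⟨p.rng, q.edges.drop p.edges.length, by
    obtain ⟨t, ht⟩ := hp
    have h1 : p.edges ++ q.edges.drop p.edges.length = q.edges := by
      rw [← ht, List.drop_left]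
    have h2 : G.Valid p.src (p.edges ++ q.edges.drop p.edges.length) := by
      rw [h1, hs]; exact q.valid
    exact ((valid_append _ _ _).mp h2).2⟩

lemma GPath.strip_rng (p q : G.GPath) (hs : p.src = q.src) (hp : p.edges <+: q.edges) :
    (p.strip q hs hp).rng = q.rng := by
  show G.dst p.rng (q.edges.drop p.edges.length) = G.dst q.src q.edges
  obtain ⟨t, ht⟩ := hp
  have h1 : p.edges ++ q.edges.drop p.edges.length = q.edges := by
    rw [← ht, List.drop_left]
  conv_rhs => rw [← hs, ← h1]
  rw [dst_append]; rfl

variable (G) in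
/-- A nonzero element `a b⁻¹` of the graph inverse semigroup: a pair of
paths with the same range. -/
structure NZ : Type u where
  a : G.GPath
  b : G.GPath
  h : a.rng = b.rng

/-- The graph inverse semigroup `G(E)` over a directed graph, in normal form:
the elements `a b⁻¹` with `r(a) = r(b)`, together with a zero element. -/
def GIS (G : DiGraph.{u}) : Type u := Option (NZ G)

instance : Zero (GIS G) := ⟨none⟩

open scoped Classical in
/-- The multiplication of the graph inverse semigroup:
`a b⁻¹ · c d⁻¹ = a c₁ d⁻¹` if `c = b c₁`, `a (d b₁)⁻¹` if `b = c b₁`, and `0` otherwise. -/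
noncomputable instance : Mul (GIS G) :=
  ⟨fun x y =>
    match x, y with
    | none, _ => none
    | some _, none => none
    | some ⟨a, b, hab⟩, some ⟨c, d, hcd⟩ =>
      if h : b.src = c.src ∧ b.edges <+: c.edges then
        some ⟨a.comp (b.strip c h.1 h.2) hab, d, by
          exact (GPath.comp_rng _ _ _).trans ((GPath.strip_rng _ _ _ _).trans hcd)⟩
      else if h' : c.src = b.src ∧ c.edges <+: b.edges then
        some ⟨a, d.comp (c.strip b h'.1 h'.2) hcd.symm, by
          exact hab.trans ((GPath.comp_rng _ _ _).trans (GPath.strip_rng _ _ _ _)).symm⟩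
      else none⟩

/-- The nonzero element `a b⁻¹` of `G(E)` determined by a pair of paths
with the same range. -/
def GIS.nz (n : NZ G) : GIS G := some n

/-- The inversion of the graph inverse semigroup: `(u v⁻¹)⁻¹ = v u⁻¹`. -/
def GIS.inv : GIS G → GIS G
  | none => none
  | some ⟨a, b, h⟩ => some ⟨b, a, h.symm⟩

end DiGraph


namespace DiGraph

variable {G : DiGraph.{u}}

lemma GPath.ext' {p q : G.GPath} (h1 : p.src = q.src) (h2 : p.edges = q.edges) : p = q := by
  cases p; cases q; simp_all

lemma NZ.ext' {n m : NZ G} (h1 : n.a = m.a) (h2 : n.b = m.b) : n = m := by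
  cases n; cases m; simp_all

@[simp] lemma GPath.comp_src (p q : G.GPath) (h : p.rng = q.src) :
    (p.comp q h).src = p.src := rfl

@[simp] lemma GPath.comp_edges (p q : G.GPath) (h : p.rng = q.src) :
    (p.comp q h).edges = p.edges ++ q.edges := rfl

@[simp] lemma GPath.strip_src (p q : G.GPath) (hs : p.src = q.src) (hp : p.edges <+: q.edges) :
    (p.strip q hs hp).src = p.rng := rfl

@[simp] lemma GPath.strip_edges (p q : G.GPath) (hs : p.src = q.src) (hp : p.edges <+: q.edges) :
    (p.strip q hs hp).edges = q.edges.drop p.edges.length := rfl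

@[simp] lemma GPath.comp_strip_src (p q r : G.GPath) (hs : q.src = r.src) (hp : q.edges <+: r.edges)
    (h : p.rng = q.rng) : (p.comp (q.strip r hs hp) h).src = p.src := rfl

@[simp] lemma GPath.comp_strip_edges (p q r : G.GPath) (hs : q.src = r.src) (hp : q.edges <+: r.edges)
    (h : p.rng = q.rng) :
    (p.comp (q.strip r hs hp) h).edges = p.edges ++ r.edges.drop q.edges.length := rfl

lemma drop_helper {α : Type u} (c t : List α) (k : ℕ) :
    (c ++ t).drop (c.length + k) = t.drop k := by
  rw [← List.drop_drop, List.drop_left]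

open scoped Classical in
/-- The representation of `GIS G` by partial maps on paths. -/
noncomputable def rho (x : GIS G) (z : G.GPath) : Option G.GPath :=
  match x with
  | none => none
  | some n =>
      if h : n.b.src = z.src ∧ n.b.edges <+: z.edges then
        some (n.a.comp (n.b.strip z h.1 h.2) n.h)
      else none

open scoped Classical in
lemma rho_some (n : NZ G) (z : G.GPath) :
    rho (some n) z =
      if h : n.b.src = z.src ∧ n.b.edges <+: z.edges then
        some (n.a.comp (n.b.strip z h.1 h.2) n.h)
      else none := rfl

open scoped Classical in
lemma mul_some_some (a b c d : G.GPath) (hab : a.rng = b.rng) (hcd : c.rng = d.rng) :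
    @HMul.hMul (GIS G) (GIS G) (GIS G) _ (some ⟨a, b, hab⟩) (some ⟨c, d, hcd⟩) =
      if h : b.src = c.src ∧ b.edges <+: c.edges then
        some ⟨a.comp (b.strip c h.1 h.2) hab, d, by
          exact (GPath.comp_rng _ _ _).trans ((GPath.strip_rng _ _ _ _).trans hcd)⟩
      else if h' : c.src = b.src ∧ c.edges <+: b.edges then
        some ⟨a, d.comp (c.strip b h'.1 h'.2) hcd.symm, by
          exact hab.trans ((GPath.comp_rng _ _ _).trans (GPath.strip_rng _ _ _ _)).symm⟩
      else none := rfl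

lemma rho_mul (x y : GIS G) (z : G.GPath) :
    rho (x * y) z = (rho y z).bind (rho x) := by
  match x, y with
  | none, y =>
      cases rho y z <;> rfl
  | some n, none => rfl
  | some ⟨a, b, hab⟩, some ⟨c, d, hcd⟩ =>
      rw [mul_some_some]
      by_cases h2 : d.src = z.src ∧ d.edges <+: z.edges
      · have hy : rho (some ⟨c, d, hcd⟩) z = some (c.comp (d.strip z h2.1 h2.2) hcd) := by
          rw [rho_some]; exact dif_pos h2
        rw [hy]
        show _ = rho (some ⟨a, b, hab⟩) (c.comp (d.strip z h2.1 h2.2) hcd)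
        by_cases h1 : b.src = c.src ∧ b.edges <+: c.edges
        · rw [dif_pos h1, rho_some, rho_some]
          rw [dif_pos (show d.src = z.src ∧ d.edges <+: z.edges from h2)]
          rw [dif_pos (show b.src = (c.comp (d.strip z h2.1 h2.2) hcd).src ∧
              b.edges <+: (c.comp (d.strip z h2.1 h2.2) hcd).edges from
            ⟨h1.1, h1.2.trans (List.prefix_append _ _)⟩)]
          congr 1
          refine GPath.ext' rfl ?_
          simp [List.drop_append_of_le_length h1.2.length_le, List.append_assoc]
        · by_cases h1' : c.src = b.src ∧ c.edges <+: b.edges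
          · rw [dif_neg h1, dif_pos h1', rho_some, rho_some]
            obtain ⟨t, ht⟩ := h2.2
            have hdrop : z.edges.drop d.edges.length = t := by rw [← ht, List.drop_left]
            obtain ⟨b₁, hb₁⟩ := h1'.2
            have hbdrop : b.edges.drop c.edges.length = b₁ := by rw [← hb₁, List.drop_left]
            by_cases h3 : b.edges.drop c.edges.length <+: z.edges.drop d.edges.length
            · rw [dif_pos (show (d.comp (c.strip b h1'.1 h1'.2) hcd.symm).src = z.src ∧
                  (d.comp (c.strip b h1'.1 h1'.2) hcd.symm).edges <+: z.edges from
                ⟨h2.1, by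
                  simp only [GPath.comp_edges, GPath.strip_edges, GPath.comp_strip_edges]
                  rw [← ht]
                  exact (List.prefix_append_right_inj d.edges).mpr (hdrop ▸ h3)⟩)]
              rw [dif_pos (show b.src = (c.comp (d.strip z h2.1 h2.2) hcd).src ∧
                  b.edges <+: (c.comp (d.strip z h2.1 h2.2) hcd).edges from
                ⟨h1'.1.symm, by
                  simp only [GPath.comp_edges, GPath.strip_edges, GPath.comp_strip_edges]
                  rw [← hb₁]
                  exact (List.prefix_append_right_inj c.edges).mpr (hbdrop ▸ h3)⟩)]
              congr 1
              refine GPath.ext' rfl ?_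
              show a.edges ++ z.edges.drop (d.comp (c.strip b h1'.1 h1'.2) hcd.symm).edges.length =
                a.edges ++ (c.edges ++ z.edges.drop d.edges.length).drop b.edges.length
              simp only [GPath.comp_edges, GPath.strip_edges, GPath.comp_strip_edges, List.length_append]
              rw [hbdrop, ← hb₁, List.length_append, drop_helper, ← List.drop_drop]
            · rw [dif_neg (show ¬((d.comp (c.strip b h1'.1 h1'.2) hcd.symm).src = z.src ∧
                  (d.comp (c.strip b h1'.1 h1'.2) hcd.symm).edges <+: z.edges) from by
                rintro ⟨-, hpre⟩
                apply h3
                simp only [GPath.comp_edges, GPath.strip_edges, GPath.comp_strip_edges] at hpre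
                rw [← ht] at hpre
                rw [hdrop]
                exact (List.prefix_append_right_inj d.edges).mp hpre)]
              rw [dif_neg (show ¬(b.src = (c.comp (d.strip z h2.1 h2.2) hcd).src ∧
                  b.edges <+: (c.comp (d.strip z h2.1 h2.2) hcd).edges) from by
                rintro ⟨-, hpre⟩
                apply h3
                simp only [GPath.comp_edges, GPath.strip_edges, GPath.comp_strip_edges] at hpre
                rw [← hb₁] at hpre
                rw [hbdrop]
                exact (List.prefix_append_right_inj c.edges).mp hpre)]
          · rw [dif_neg h1, dif_neg h1']
            show (none : Option G.GPath) = _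
            rw [rho_some, dif_neg (show ¬(b.src = (c.comp (d.strip z h2.1 h2.2) hcd).src ∧
                b.edges <+: (c.comp (d.strip z h2.1 h2.2) hcd).edges) from by
              rintro ⟨hsrc, hpre⟩
              simp only [GPath.comp_src, GPath.comp_edges, GPath.strip_edges, GPath.comp_strip_src, GPath.comp_strip_edges] at hsrc hpre
              rcases List.prefix_or_prefix_of_prefix hpre (List.prefix_append _ _) with hp | hp
              · exact h1 ⟨hsrc, hp⟩
              · exact h1' ⟨hsrc.symm, hp⟩)]
      · have hy : rho (some ⟨c, d, hcd⟩) z = none := by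
          rw [rho_some]; exact dif_neg h2
        rw [hy]
        show _ = (none : Option G.GPath)
        by_cases h1 : b.src = c.src ∧ b.edges <+: c.edges
        · rw [dif_pos h1, rho_some]
          exact dif_neg h2
        · by_cases h1' : c.src = b.src ∧ c.edges <+: b.edges
          · rw [dif_neg h1, dif_pos h1', rho_some]
            refine dif_neg ?_
            rintro ⟨hs, hp⟩
            exact h2 ⟨hs, (List.prefix_append _ _).trans hp⟩
          · rw [dif_neg h1, dif_neg h1']
            rfl

lemma rho_mul' (x y : GIS G) : rho (x * y) = fun z => (rho y z).bind (rho x) :=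
  funext (rho_mul x y)

lemma rho_a (n : NZ G) : rho (some n) n.b = some n.a := by
  rw [rho_some, dif_pos ⟨rfl, List.prefix_rfl⟩]
  congr 1
  refine GPath.ext' rfl ?_
  simp

lemma rho_dom {n : NZ G} {z w : G.GPath} (h : rho (some n) z = some w) :
    n.b.src = z.src ∧ n.b.edges <+: z.edges := by
  by_contra hc
  rw [rho_some, dif_neg hc] at h
  exact nomatch h

lemma rho_spec {n : NZ G} {z w : G.GPath} (h : rho (some n) z = some w) :
    w.src = n.a.src ∧ w.edges = n.a.edges ++ z.edges.drop n.b.edges.length := by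
  have hd := rho_dom h
  rw [rho_some, dif_pos hd] at h
  cases h
  exact ⟨rfl, rfl⟩

lemma rho_inj_on {n : NZ G} {z z' w : G.GPath}
    (h : rho (some n) z = some w) (h' : rho (some n) z' = some w) : z = z' := by
  have hd := rho_dom h
  have hd' := rho_dom h'
  have hs := rho_spec h
  have hs' := rho_spec h'
  have hdr : z.edges.drop n.b.edges.length = z'.edges.drop n.b.edges.length :=
    List.append_cancel_left (hs.2.symm.trans hs'.2)
  apply GPath.ext' (hd.1.symm.trans hd'.1)
  obtain ⟨t, ht⟩ := hd.2
  obtain ⟨t', ht'⟩ := hd'.2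
  have h1 : z.edges.drop n.b.edges.length = t := by rw [← ht, List.drop_left]
  have h2 : z'.edges.drop n.b.edges.length = t' := by rw [← ht', List.drop_left]
  rw [← ht, ← ht', ← h1, ← h2, hdr]

lemma rho_inj : Function.Injective (rho : GIS G → G.GPath → Option G.GPath) := by
  intro x y hxy
  match x, y with
  | none, none => rfl
  | none, some m =>
      have h : rho (none : GIS G) m.b = some m.a := (congrFun hxy m.b).trans (rho_a m)
      exact nomatch (h : (none : Option G.GPath) = some m.a)
  | some n, none =>
      have h : rho (none : GIS G) n.b = some n.a :=
        (congrFun hxy n.b).symm.trans (rho_a n)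
      exact nomatch (h : (none : Option G.GPath) = some n.a)
  | some n, some m =>
      have h1 : rho (some m) n.b = some n.a := (congrFun hxy n.b).symm.trans (rho_a n)
      have h2 : rho (some n) m.b = some m.a := (congrFun hxy m.b).trans (rho_a m)
      have hd1 := rho_dom h1
      have hd2 := rho_dom h2
      have hb : n.b = m.b := by
        apply GPath.ext' hd2.1
        exact hd2.2.eq_of_length (Nat.le_antisymm hd2.2.length_le hd1.2.length_le)
      have h2' : rho (some n) n.b = some m.a := by rw [hb]; exact h2
      have ha : n.a = m.a := Option.some.inj ((rho_a n).symm.trans h2')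
      exact congrArg some (NZ.ext' ha hb)

lemma gis_assoc (x y z : GIS G) : x * y * z = x * (y * z) := by
  apply rho_inj
  funext w
  rw [rho_mul (x * y) z w, rho_mul' x y, rho_mul x (y * z) w, rho_mul' y z]
  cases hzw : rho z w <;> simp [hzw]

lemma idem_fix {e : GIS G} (he : e * e = e) {z w : G.GPath} (h : rho e z = some w) : w = z := by
  have h2 : rho e w = some w := by
    have h3 := rho_mul e e z
    rw [he, h] at h3
    exact h3.symm
  match e with
  | none => exact nomatch (h : (none : Option G.GPath) = some w)
  | some n => exact rho_inj_on h2 h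

lemma idem_comm {e f : GIS G} (he : e * e = e) (hf : f * f = f) : e * f = f * e := by
  apply rho_inj
  funext z
  rw [rho_mul e f z, rho_mul f e z]
  rcases hfz : rho f z with _ | w
  · rcases hez : rho e z with _ | w'
    · rfl
    · have hw' := idem_fix he hez
      simp [hw', hfz]
  · have hw := idem_fix hf hfz
    rcases hez : rho e z with _ | w'
    · simp [hw, hez]
    · have hw' := idem_fix he hez
      simp [hw, hw', hez, hfz]

lemma nz_mul_nz (a b c : G.GPath) (h1 : a.rng = b.rng) (h2 : b.rng = c.rng) :
    @HMul.hMul (GIS G) (GIS G) (GIS G) _ (some ⟨a, b, h1⟩) (some ⟨b, c, h2⟩) =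
      some ⟨a, c, h1.trans h2⟩ := by
  rw [mul_some_some, dif_pos ⟨rfl, List.prefix_rfl⟩]
  refine congrArg some (NZ.ext' ?_ rfl)
  refine GPath.ext' rfl ?_
  simp

lemma inv_works (x : GIS G) :
    x * GIS.inv x * x = x ∧ GIS.inv x * x * GIS.inv x = GIS.inv x := by
  match x with
  | none => exact ⟨rfl, rfl⟩
  | some ⟨a, b, h⟩ =>
      have hinv : GIS.inv (some ⟨a, b, h⟩) = some ⟨b, a, h.symm⟩ := rfl
      constructor
      · rw [hinv, nz_mul_nz, nz_mul_nz]
      · rw [hinv, nz_mul_nz, nz_mul_nz]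

end DiGraph

lemma unique_inv {S : Type u} [Semigroup S]
    (comm : ∀ e f : S, e * e = e → f * f = f → e * f = f * e)
    {x i j : S} (hi1 : x * i * x = x) (hi2 : i * x * i = i)
    (hj1 : x * j * x = x) (hj2 : j * x * j = j) : i = j := by
  have hix : (i * x) * (i * x) = i * x := by
    rw [mul_assoc, ← mul_assoc x i x, hi1]
  have hjx : (j * x) * (j * x) = j * x := by
    rw [mul_assoc, ← mul_assoc x j x, hj1]
  have hxi : (x * i) * (x * i) = x * i := by
    rw [mul_assoc, ← mul_assoc i x i, hi2]
  have hxj : (x * j) * (x * j) = x * j := by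
    rw [mul_assoc, ← mul_assoc j x j, hj2]
  have key1 : i = j * x * i := by
    calc i = i * x * i := hi2.symm
      _ = i * (x * j * x) * i := by rw [hj1]
      _ = ((i * x) * (j * x)) * i := by simp only [mul_assoc]
      _ = ((j * x) * (i * x)) * i := by rw [comm _ _ hix hjx]
      _ = j * x * (i * x * i) := by simp only [mul_assoc]
      _ = j * x * i := by rw [hi2]
  have key2 : j = j * x * i := by
    calc j = j * x * j := hj2.symm
      _ = j * (x * i * x) * j := by rw [hi1]
      _ = j * ((x * i) * (x * j)) := by simp only [mul_assoc]
      _ = j * ((x * j) * (x * i)) := by rw [comm _ _ hxi hxj]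
      _ = (j * x * j) * (x * i) := by simp only [mul_assoc]
      _ = j * (x * i) := by rw [hj2]
      _ = j * x * i := by rw [← mul_assoc]
  exact key1.trans key2.symm

open DiGraph in
/-- The set `{a b⁻¹ : a, b ∈ Path(E), r(a) = r(b)} ∪ {0}`, with the
multiplication `a b⁻¹ · c d⁻¹ = a c₁ d⁻¹` if `c = b c₁`, `a (d b₁)⁻¹` if
`b = c b₁`, and `0` otherwise, is an inverse semigroup in which the inverse
of `u v⁻¹` is `v u⁻¹`. -/
theorem gis_isInverseSemigroup (G : DiGraph.{u}) :
    (∀ x y z : GIS G, x * y * z = x * (y * z)) ∧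
    (∀ x : GIS G, ∃! i : GIS G, x * i * x = x ∧ i * x * i = i) ∧
    (∀ x : GIS G, x * GIS.inv x * x = x ∧ GIS.inv x * x * GIS.inv x = GIS.inv x) ∧
    (∀ (u v : G.GPath) (h : u.rng = v.rng),
      GIS.inv (GIS.nz ⟨u, v, h⟩) = GIS.nz ⟨v, u, h.symm⟩) := by
  letI : Semigroup (GIS G) := { mul := (· * ·), mul_assoc := gis_assoc }
  refine ⟨gis_assoc, ?_, inv_works, fun u v h => rfl⟩
  intro x
  refine ⟨GIS.inv x, inv_works x, fun i hi => ?_⟩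
  exact unique_inv (fun e f he hf => idem_comm he hf) hi.1 hi.2 (inv_works x).1 (inv_works x).2
end

section
/- Every graph inverse semigroup G(E) over a countable graph E (i.e., with countably many vertices and edges) embeds into the polycyclic monoid P_2. -/
universe u

namespace DiGraph

/-- The graph with one vertex and a loop for each element of `ι`. -/
def bouquet (ι : Type u) : DiGraph.{u} :=
  ⟨PUnit, ι, fun _ => PUnit.unit, fun _ => PUnit.unit⟩

/-- The polycyclic monoid `P_ι` on a set `ι` of generators, realized as the
graph inverse semigroup over the graph with one vertex and `ι` many loops. -/
def PolyM (ι : Type u) : Type u := GIS (bouquet ι)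

noncomputable instance (ι : Type u) : Mul (PolyM ι) :=
  inferInstanceAs (Mul (GIS (bouquet ι)))

instance (ι : Type u) : Zero (PolyM ι) := inferInstanceAs (Zero (GIS (bouquet ι)))

end DiGraph


namespace DiGraph

/-- Prefix-free binary code of a natural number. -/
def bcode (n : ℕ) : List Bool := List.replicate n true ++ [false]

lemma bcode_zero (u : List Bool) : bcode 0 ++ u = false :: u := rfl

lemma bcode_succ (n : ℕ) (u : List Bool) :
    bcode (n + 1) ++ u = true :: (bcode n ++ u) := by
  simp [bcode, List.replicate_succ]

lemma bcode_pref : ∀ (n m : ℕ) (u v : List Bool),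
    bcode n ++ u <+: bcode m ++ v → n = m ∧ u <+: v := by
  intro n
  induction n with
  | zero =>
    intro m u v h
    cases m with
    | zero =>
      rw [bcode_zero, bcode_zero, List.cons_prefix_cons] at h
      exact ⟨rfl, h.2⟩
    | succ k =>
      rw [bcode_zero, bcode_succ, List.cons_prefix_cons] at h
      exact absurd h.1 (by simp)
  | succ k ih =>
    intro m u v h
    cases m with
    | zero =>
      rw [bcode_succ, bcode_zero, List.cons_prefix_cons] at h
      exact absurd h.1 (by simp)
    | succ j =>
      rw [bcode_succ, bcode_succ, List.cons_prefix_cons] at h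
      obtain ⟨h1, h2⟩ := ih j u v h.2
      exact ⟨by omega, h2⟩

variable {G : DiGraph.{u}}

/-- Encoding of a list of edges as a list of booleans. -/
def estar (fE : G.E → ℕ) : List G.E → List Bool
  | [] => []
  | e :: t => bcode (fE e) ++ estar fE t

lemma estar_append (fE : G.E → ℕ) (l₁ l₂ : List G.E) :
    estar fE (l₁ ++ l₂) = estar fE l₁ ++ estar fE l₂ := by
  induction l₁ with
  | nil => rfl
  | cons e t ih => simp [estar, ih]

lemma estar_pref (fE : G.E → ℕ) (hE : Function.Injective fE) :
    ∀ (l₁ l₂ : List G.E), estar fE l₁ <+: estar fE l₂ → l₁ <+: l₂ := by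
  intro l₁
  induction l₁ with
  | nil => intro l₂ _; exact List.nil_prefix
  | cons e t ih =>
    intro l₂ h
    cases l₂ with
    | nil =>
      exfalso
      have := h.length_le
      simp [estar, bcode] at this
    | cons e' t' =>
      simp only [estar] at h
      obtain ⟨h1, h2⟩ := bcode_pref _ _ _ _ h
      obtain rfl := hE h1
      rw [List.cons_prefix_cons]
      exact ⟨rfl, ih t' h2⟩

/-- Encoding of a path as a list of booleans. -/
def wcode (fV : G.V → ℕ) (fE : G.E → ℕ) (p : G.GPath) : List Bool :=
  bcode (fV p.src) ++ estar fE p.edges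

lemma wcode_pref_iff (fV : G.V → ℕ) (fE : G.E → ℕ)
    (hV : Function.Injective fV) (hE : Function.Injective fE) (p q : G.GPath) :
    wcode fV fE p <+: wcode fV fE q ↔ p.src = q.src ∧ p.edges <+: q.edges := by
  constructor
  · intro h
    obtain ⟨h1, h2⟩ := bcode_pref _ _ _ _ h
    exact ⟨hV h1, estar_pref fE hE _ _ h2⟩
  · rintro ⟨h1, ⟨t, ht⟩⟩
    refine ⟨estar fE t, ?_⟩
    rw [wcode, wcode, h1, ← ht, estar_append, List.append_assoc]

lemma wcode_inj (fV : G.V → ℕ) (fE : G.E → ℕ)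
    (hV : Function.Injective fV) (hE : Function.Injective fE) :
    Function.Injective (wcode fV fE) := by
  intro p q h
  have h1 := (wcode_pref_iff fV fE hV hE p q).mp (h ▸ List.prefix_refl _)
  have h2 := (wcode_pref_iff fV fE hV hE q p).mp (h ▸ List.prefix_refl _)
  exact GPath.ext' h1.1 (h1.2.eq_of_length (le_antisymm h1.2.length_le h2.2.length_le))

lemma wcode_comp (fV : G.V → ℕ) (fE : G.E → ℕ) (p q : G.GPath) (h : p.rng = q.src) :
    wcode fV fE (p.comp q h) = wcode fV fE p ++ estar fE q.edges := by
  simp [wcode, GPath.comp, estar_append]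

lemma wcode_strip_drop (fV : G.V → ℕ) (fE : G.E → ℕ) (b c : G.GPath)
    (hs : b.src = c.src) (hp : b.edges <+: c.edges) :
    (wcode fV fE c).drop (wcode fV fE b).length
      = estar fE ((b.strip c hs hp).edges) := by
  obtain ⟨t, ht⟩ := hp
  have h1 : (b.strip c hs ⟨t, ht⟩).edges = t := by
    show c.edges.drop b.edges.length = t
    rw [← ht, List.drop_left]
  have h2 : wcode fV fE c = wcode fV fE b ++ estar fE t := by
    rw [wcode, wcode, hs, ← ht, estar_append, List.append_assoc]
  rw [h1, h2, List.drop_left]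

lemma bouquet_valid : ∀ (l : List Bool) (v : (bouquet Bool).V),
    (bouquet Bool).Valid v l
  | [], _ => trivial
  | _ :: t, v => by cases v; exact ⟨rfl, bouquet_valid t _⟩

instance (ι : Type u) : Subsingleton (bouquet ι).V :=
  inferInstanceAs (Subsingleton PUnit)

/-- A path in the bouquet on `Bool` given by a list of booleans. -/
def BP (l : List Bool) : (bouquet Bool).GPath :=
  ⟨PUnit.unit, l, bouquet_valid l _⟩

open scoped Classical in
lemma GIS.mul_some_some (a b : NZ G) :
    GIS.nz a * GIS.nz b
      = if h : a.b.src = b.a.src ∧ a.b.edges <+: b.a.edges then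
          GIS.nz ⟨a.a.comp (a.b.strip b.a h.1 h.2) a.h, b.b, by
            exact (GPath.comp_rng _ _ _).trans ((GPath.strip_rng _ _ _ _).trans b.h)⟩
        else if h' : b.a.src = a.b.src ∧ b.a.edges <+: a.b.edges then
          GIS.nz ⟨a.a, b.b.comp (b.a.strip a.b h'.1 h'.2) b.h.symm, by
            exact a.h.trans ((GPath.comp_rng _ _ _).trans (GPath.strip_rng _ _ _ _)).symm⟩
        else none := by
  obtain ⟨aa, ab, ah⟩ := a
  obtain ⟨ba, bb, bh⟩ := b
  rfl

/-- The embedding map `G(E) → P₂` induced by injections of vertices and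
edges into `ℕ`. -/
def Fmap (fV : G.V → ℕ) (fE : G.E → ℕ) : GIS G → PolyM Bool
  | none => none
  | some n => GIS.nz ⟨BP (wcode fV fE n.a), BP (wcode fV fE n.b), Subsingleton.elim _ _⟩

lemma Fmap_nz (fV : G.V → ℕ) (fE : G.E → ℕ) (n : NZ G) :
    Fmap fV fE (GIS.nz n)
      = GIS.nz ⟨BP (wcode fV fE n.a), BP (wcode fV fE n.b), Subsingleton.elim _ _⟩ := rfl

theorem gis_embeds_aux (G : DiGraph.{0}) (fV : G.V → ℕ) (fE : G.E → ℕ)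
    (hV : Function.Injective fV) (hE : Function.Injective fE) :
    ∃ f : GIS G →ₙ* PolyM Bool, Function.Injective f := by
  classical
  have hWinj : Function.Injective (wcode fV fE) := wcode_inj fV fE hV hE
  refine ⟨⟨Fmap fV fE, ?_⟩, ?_⟩
  · rintro (_ | a) (_ | b)
    · rfl
    · rfl
    · rfl
    · show Fmap fV fE (GIS.nz a * GIS.nz b)
        = Fmap fV fE (GIS.nz a) * Fmap fV fE (GIS.nz b)
      rw [Fmap_nz, Fmap_nz, GIS.mul_some_some a b]
      erw [GIS.mul_some_some]
      by_cases h : a.b.src = b.a.src ∧ a.b.edges <+: b.a.edges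
      · rw [dif_pos h, dif_pos (show (BP (wcode fV fE a.b)).src = (BP (wcode fV fE b.a)).src ∧
            (BP (wcode fV fE a.b)).edges <+: (BP (wcode fV fE b.a)).edges from
            ⟨rfl, (wcode_pref_iff fV fE hV hE _ _).mpr h⟩), Fmap_nz]
        congr 1
        have he : (wcode fV fE (a.a.comp (a.b.strip b.a h.1 h.2) a.h)) =
            wcode fV fE a.a ++ (wcode fV fE b.a).drop (wcode fV fE a.b).length := by
          erw [wcode_comp, wcode_strip_drop fV fE a.b b.a h.1 h.2]
        exact congrArg₂ (fun x y => (⟨x, y, Subsingleton.elim _ _⟩ : NZ (bouquet Bool)))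
          (GPath.ext' (Subsingleton.elim _ _) he) rfl
      · rw [dif_neg h, dif_neg (fun hc : (BP (wcode fV fE a.b)).src = (BP (wcode fV fE b.a)).src ∧
            (BP (wcode fV fE a.b)).edges <+: (BP (wcode fV fE b.a)).edges =>
            h ((wcode_pref_iff fV fE hV hE _ _).mp hc.2))]
        by_cases h' : b.a.src = a.b.src ∧ b.a.edges <+: a.b.edges
        · erw [dif_pos h', dif_pos (show (BP (wcode fV fE b.a)).src = (BP (wcode fV fE a.b)).src ∧
              (BP (wcode fV fE b.a)).edges <+: (BP (wcode fV fE a.b)).edges from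
              ⟨rfl, (wcode_pref_iff fV fE hV hE _ _).mpr h'⟩), Fmap_nz]
          congr 1
          have he : (wcode fV fE (b.b.comp (b.a.strip a.b h'.1 h'.2) b.h.symm)) =
              wcode fV fE b.b ++ (wcode fV fE a.b).drop (wcode fV fE b.a).length := by
            erw [wcode_comp, wcode_strip_drop fV fE b.a a.b h'.1 h'.2]
          exact congrArg₂ (fun x y => (⟨x, y, Subsingleton.elim _ _⟩ : NZ (bouquet Bool)))
            rfl (GPath.ext' (Subsingleton.elim _ _) he)
        · erw [dif_neg h', dif_neg (fun hc : (BP (wcode fV fE b.a)).src = (BP (wcode fV fE a.b)).src ∧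
              (BP (wcode fV fE b.a)).edges <+: (BP (wcode fV fE a.b)).edges =>
              h' ((wcode_pref_iff fV fE hV hE _ _).mp hc.2))]
          rfl
  · rintro (_ | a) (_ | b) hab
    · rfl
    · exact absurd hab (by simp [Fmap, GIS.nz])
    · exact absurd hab (by simp [Fmap, GIS.nz])
    · have hab' : Fmap fV fE (GIS.nz a) = Fmap fV fE (GIS.nz b) := hab
      rw [Fmap_nz, Fmap_nz] at hab'
      have hab : (⟨BP (wcode fV fE a.a), BP (wcode fV fE a.b), Subsingleton.elim _ _⟩ :
          NZ (bouquet Bool)) = ⟨BP (wcode fV fE b.a), BP (wcode fV fE b.b),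
          Subsingleton.elim _ _⟩ := Option.some.inj hab' 
      have h1 := congrArg NZ.a hab
      have h2 := congrArg NZ.b hab
      have e1 : a.a = b.a := hWinj (congrArg GPath.edges h1)
      have e2 : a.b = b.b := hWinj (congrArg GPath.edges h2)
      obtain ⟨aa, ab, ah⟩ := a
      obtain ⟨ba, bb, bh⟩ := b
      simp only at e1 e2
      cases e1; cases e2; rfl

end DiGraph

open DiGraph in
/-- Every graph inverse semigroup `G(E)` over a countable graph `E` (countably
many vertices and edges) embeds into the polycyclic monoid `P₂`. -/
theorem gis_countable_embeds_poly_two (G : DiGraph.{0})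
    [Countable G.V] [Countable G.E] :
    ∃ f : GIS G →ₙ* PolyM Bool, Function.Injective f := by
  obtain ⟨fV, hV⟩ := Countable.exists_injective_nat G.V
  obtain ⟨fE, hE⟩ := Countable.exists_injective_nat G.E
  exact gis_embeds_aux G fV fE hV hE
end
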